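/- Let θ, ψ, c > 0. Then E₀ := (1/(2ψ))(ψ − θ + √((ψ−θ)² + 4θψc)) satisfies E₀ ≥ c(θ+ψ)/(θ+cψ) =: E_∞, with equality if and only if c = 1. -/
import Mathlib


/-- The deterministic steady-state mean `E₀` dominates the `μ → ∞` stochastic limit
`E_∞ = c(θ+ψ)/(θ+cψ)`, with equality iff `c = 1`. -/
theorem stmt17 (θ ψ c : ℝ) (hθ : 0 < θ) (hψ : 0 < ψ) (hc : 0 < c) :
    c * (θ + ψ) / (θ + c * ψ)
        ≤ (1 / (2 * ψ)) * (ψ - θ + Real.sqrt ((ψ - θ) ^ 2 + 4 * θ * ψ * c)) ∧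
    ((1 / (2 * ψ)) * (ψ - θ + Real.sqrt ((ψ - θ) ^ 2 + 4 * θ * ψ * c))
        = c * (θ + ψ) / (θ + c * ψ) ↔ c = 1) := by
  have hs : 0 < θ + c * ψ := by positivity
  set D : ℝ := (ψ - θ) ^ 2 + 4 * θ * ψ * c with hDdef
  have hD0 : 0 ≤ D := by positivity
  set E : ℝ := c * (θ + ψ) / (θ + c * ψ) with hEdef
  set A : ℝ := 2 * ψ * E - (ψ - θ) with hAdef
  have hEs : E * (θ + c * ψ) = c * (θ + ψ) := by
    rw [hEdef]; field_simp
  have hkey : (D - A ^ 2) * (θ + c * ψ) ^ 2 = 4 * θ * ψ ^ 3 * c * (c - 1) ^ 2 := by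
    have hAs : A * (θ + c * ψ) = 2 * ψ * (c * (θ + ψ)) - (ψ - θ) * (θ + c * ψ) := by
      rw [hAdef]; nlinarith [hEs]
    have hexp : (D - A ^ 2) * (θ + c * ψ) ^ 2
        = D * (θ + c * ψ) ^ 2 - (A * (θ + c * ψ)) ^ 2 := by ring
    rw [hexp, hAs, hDdef]; ring
  have hA2 : A ^ 2 ≤ D := by
    have h0 : 0 ≤ (D - A ^ 2) * (θ + c * ψ) ^ 2 := hkey ▸ by positivity
    nlinarith [sq_nonneg (θ + c * ψ), mul_pos hs hs]
  have hAle : A ≤ Real.sqrt D := by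
    rcases le_or_gt A 0 with h | h
    · exact h.trans (Real.sqrt_nonneg D)
    · calc A = Real.sqrt (A ^ 2) := (Real.sqrt_sq h.le).symm
        _ ≤ Real.sqrt D := Real.sqrt_le_sqrt hA2
  have h2 : 2 * ψ * E ≤ ψ - θ + Real.sqrt D := by rw [hAdef] at hAle; linarith
  have h3 : (1 / (2 * ψ)) * (2 * ψ * E) = E := by field_simp
  have hinv : (0:ℝ) ≤ 1 / (2 * ψ) := by positivity
  constructor
  · have := mul_le_mul_of_nonneg_left h2 hinv
    linarith [h3 ▸ this]
  · constructor
    · intro h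
      have hsq : Real.sqrt D = A := by
        rw [hAdef]
        field_simp at h
        linarith
      have hDA : D = A ^ 2 := by
        rw [← hsq, Real.sq_sqrt hD0]
      have h4 : 4 * θ * ψ ^ 3 * c * (c - 1) ^ 2 = 0 := by
        rw [← hkey, hDA]; ring
      have hpos : 0 < 4 * θ * ψ ^ 3 * c := by positivity
      have hc1 : (c - 1) ^ 2 = 0 := (mul_eq_zero.mp h4).resolve_left (ne_of_gt hpos)
      have := pow_eq_zero_iff (n := 2) (by norm_num) |>.mp hc1
      linarith
    · intro h
      subst h
      have hDsq : D = (ψ + θ) ^ 2 := by rw [hDdef]; ring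
      rw [hDsq, Real.sqrt_sq (by positivity)]
      rw [hEdef]
      field_simp
      ring
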